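/- Let A ∈ ℝ^{n×n}, B ∈ ℝ^{n×m}, C ∈ ℝ^{p×n}, D ∈ ℝ^{p×m}, E ∈ ℝ^{n×q} with (A,B) stabilizable, DᵀC = 0 and DᵀD = I_m, and let γ > 0. Suppose there exists a positive semidefinite matrix P ∈ ℝ^{n×n} satisfying AᵀP + PA − PBBᵀP + CᵀC < 0 and tr(EᵀPE) < γ. Set K = −BᵀP. Then A + BK is Hurwitz and the closed-loop H₂ cost J(K) = ∫₀^∞ tr(TK(t)ᵀ TK(t)) dt, where TK(t) = (C + DK)e^{(A+BK)t}E, satisfies J(K) < γ. -/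

import Mathlib

open Matrix Filter

/-- Matrix exponential over the reals. -/
noncomputable def mexp {ι : Type*} [Fintype ι] [DecidableEq ι]
    (A : Matrix ι ι ℝ) : Matrix ι ι ℝ :=
  NormedSpace.exp A

/-- A real square matrix is Hurwitz if every complex eigenvalue has negative real part. -/
def IsHurwitz {ι : Type*} [Fintype ι] [DecidableEq ι] (A : Matrix ι ι ℝ) : Prop :=
  ∀ μ ∈ spectrum ℂ (A.map (algebraMap ℝ ℂ)), μ.re < 0

/-- `M < 0` : `M` is symmetric negative definite. -/
def NegDef {ι : Type*} [Fintype ι] (M : Matrix ι ι ℝ) : Prop := (-M).PosDef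

/-! ### Auxiliary lemmas -/

noncomputable def reVec {n : ℕ} (x : Fin n → ℂ) : Fin n → ℝ := fun i => (x i).re
noncomputable def imVec {n : ℕ} (x : Fin n → ℂ) : Fin n → ℝ := fun i => (x i).im

lemma quad_complexify {n : ℕ} (M : Matrix (Fin n) (Fin n) ℝ) (hM : M.IsSymm)
    (x : Fin n → ℂ) :
    star x ⬝ᵥ (M.map (algebraMap ℝ ℂ)) *ᵥ x
      = ((reVec x ⬝ᵥ M *ᵥ reVec x + imVec x ⬝ᵥ M *ᵥ imVec x : ℝ) : ℂ) := by
  set a := reVec x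
  set b := imVec x
  set xa : Fin n → ℂ := fun i => ((a i : ℝ) : ℂ)
  set xb : Fin n → ℂ := fun i => ((b i : ℝ) : ℂ)
  have hx : x = xa + Complex.I • xb := by
    funext i
    simp only [xa, xb, a, b, reVec, imVec, Pi.add_apply, Pi.smul_apply, smul_eq_mul]
    rw [mul_comm]
    exact (Complex.re_add_im (x i)).symm
  have hs : star x = xa - Complex.I • xb := by
    funext i
    simp only [xa, xb, a, b, reVec, imVec, Pi.star_apply, Pi.sub_apply, Pi.smul_apply,
      smul_eq_mul, Complex.star_def]
    rw [mul_comm]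
    exact Complex.ext (by simp) (by simp)
  have key : ∀ u w : Fin n → ℝ, (fun i => ((u i : ℝ) : ℂ)) ⬝ᵥ (M.map (algebraMap ℝ ℂ)) *ᵥ (fun i => ((w i : ℝ) : ℂ)) = ((u ⬝ᵥ M *ᵥ w : ℝ) : ℂ) := by
    intro u w
    simp only [dotProduct, Matrix.mulVec, Matrix.map_apply]
    push_cast
    rfl
  have hsym : b ⬝ᵥ M *ᵥ a = a ⬝ᵥ M *ᵥ b := by
    rw [Matrix.dotProduct_mulVec, dotProduct_comm, ← Matrix.mulVec_transpose, hM.eq]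
  rw [hs]
  nth_rewrite 1 [hx]
  rw [Matrix.mulVec_add, Matrix.mulVec_smul, sub_dotProduct, dotProduct_add,
    dotProduct_add, smul_dotProduct, smul_dotProduct,
    dotProduct_smul, dotProduct_smul, key, key, key, key, hsym]
  rw [smul_smul, smul_eq_mul, Complex.I_mul_I]
  rw [neg_smul, one_smul]
  push_cast
  ring

lemma reVec_imVec_ne_zero {n : ℕ} {x : Fin n → ℂ} (hx : x ≠ 0) :
    reVec x ≠ 0 ∨ imVec x ≠ 0 := by
  by_contra h
  push_neg at h
  apply hx
  funext i
  have h1 : reVec x i = 0 := by rw [h.1]; rfl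
  have h2 : imVec x i = 0 := by rw [h.2]; rfl
  exact Complex.ext h1 h2

lemma quad_pos_complex {n : ℕ} {M : Matrix (Fin n) (Fin n) ℝ} (hM : M.PosDef)
    {x : Fin n → ℂ} (hx : x ≠ 0) :
    ∃ r : ℝ, 0 < r ∧ star x ⬝ᵥ (M.map (algebraMap ℝ ℂ)) *ᵥ x = (r : ℂ) := by
  have hsymm : M.IsSymm := by
    have := hM.isHermitian
    rwa [Matrix.IsHermitian, conjTranspose_eq_transpose_of_trivial] at this
  refine ⟨reVec x ⬝ᵥ M *ᵥ reVec x + imVec x ⬝ᵥ M *ᵥ imVec x, ?_, quad_complexify M hsymm x⟩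
  have hpsd := hM.posSemidef
  have h1 : 0 ≤ reVec x ⬝ᵥ M *ᵥ reVec x := by simpa using hpsd.dotProduct_mulVec_nonneg (reVec x)
  have h2 : 0 ≤ imVec x ⬝ᵥ M *ᵥ imVec x := by simpa using hpsd.dotProduct_mulVec_nonneg (imVec x)
  rcases reVec_imVec_ne_zero hx with h | h
  · have := hM.dotProduct_mulVec_pos h; simp only [star_trivial] at this; linarith
  · have := hM.dotProduct_mulVec_pos h; simp only [star_trivial] at this; linarith

lemma posdef_of_psd_lyap {n : ℕ} (Acl P R : Matrix (Fin n) (Fin n) ℝ)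
    (hP : P.PosSemidef) (hR : NegDef R) (hRe : R = Aclᵀ * P + P * Acl) : P.PosDef := by
  refine Matrix.PosDef.of_dotProduct_mulVec_pos hP.isHermitian (fun x hx => ?_)
  have hge := hP.dotProduct_mulVec_nonneg x
  rcases lt_or_eq_of_le hge with h | h
  · simpa using h
  · exfalso
    have hPx : P *ᵥ x = 0 := (hP.dotProduct_mulVec_zero_iff x).1 h.symm
    have hRx : x ⬝ᵥ R *ᵥ x = 0 := by
      rw [hRe, Matrix.add_mulVec, dotProduct_add, ← Matrix.mulVec_mulVec,
        ← Matrix.mulVec_mulVec, hPx, Matrix.mulVec_zero, dotProduct_zero,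
        Matrix.dotProduct_mulVec]
      have hsym : x ᵥ* P = P *ᵥ x := by
        rw [← Matrix.mulVec_transpose]
        have := hP.isHermitian
        rw [Matrix.IsHermitian, conjTranspose_eq_transpose_of_trivial] at this
        rw [this]
      rw [hsym, hPx]
      simp
    have := hR.dotProduct_mulVec_pos hx
    simp only [star_trivial, Matrix.neg_mulVec, dotProduct_neg] at this
    rw [hRx] at this
    simp at this

lemma eig_of_spec {n : ℕ} (M : Matrix (Fin n) (Fin n) ℂ) (μ : ℂ) (h : μ ∈ spectrum ℂ M) :
    ∃ v : Fin n → ℂ, v ≠ 0 ∧ M *ᵥ v = μ • v := by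
  rw [spectrum.mem_iff, Matrix.isUnit_iff_isUnit_det, isUnit_iff_ne_zero, not_not] at h
  obtain ⟨v, hv0, hv⟩ := (Matrix.exists_mulVec_eq_zero_iff).2 h
  refine ⟨v, hv0, ?_⟩
  rw [Matrix.sub_mulVec] at hv
  have h2 : (algebraMap ℂ (Matrix (Fin n) (Fin n) ℂ)) μ *ᵥ v = μ • v := by
    simp [Matrix.algebraMap_eq_diagonal, Matrix.diagonal_mulVec_single]
    funext i; simp [Matrix.mulVec_diagonal]
  rw [h2] at hv
  exact (sub_eq_zero.mp hv).symm

lemma hurwitz_of_lyap {n : ℕ} (Acl P R : Matrix (Fin n) (Fin n) ℝ)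
    (hP : P.PosDef) (hR : NegDef R) (hRe : R = Aclᵀ * P + P * Acl) :
    ∀ μ ∈ spectrum ℂ (Acl.map (algebraMap ℝ ℂ)), μ.re < 0 := by
  intro μ hμ
  obtain ⟨v, hv0, hv⟩ := eig_of_spec _ μ hμ
  obtain ⟨pa, hpa, hPq⟩ := quad_pos_complex hP hv0
  obtain ⟨ra, hra, hRq⟩ := quad_pos_complex (show Matrix.PosDef (-R) from hR) hv0
  set f := algebraMap ℝ ℂ
  set Ah := Acl.map f
  set Ph := P.map f
  have hmapneg : (-R).map f = -(R.map f) := by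
    funext i j; simp [Matrix.map_apply]
  have hRmap : R.map f = (Ah)ᵀ * Ph + Ph * Ah := by
    rw [hRe]
    funext i j
    simp only [Matrix.map_apply, Matrix.add_apply, Matrix.mul_apply, Matrix.transpose_apply,
      map_add, map_sum, _root_.map_mul]
    rfl
  have hconj : Ah *ᵥ star v = star (Ah *ᵥ v) := by
    funext i
    show (∑ j, Ah i j * star (v j)) = star (∑ j, Ah i j * v j)
    rw [star_sum]
    congr 1; funext j
    rw [star_mul']
    have : star (f (Acl i j)) = f (Acl i j) := by
      simp [f, Complex.star_def, Complex.conj_ofReal]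
    exact (congrArg (· * star (v j)) this).symm
  have hrel : star v ⬝ᵥ (R.map f) *ᵥ v = ((starRingEnd ℂ) μ + μ) * (pa : ℂ) := by
    rw [hRmap, Matrix.add_mulVec, dotProduct_add, ← Matrix.mulVec_mulVec,
      ← Matrix.mulVec_mulVec]
    have t2 : star v ⬝ᵥ Ph *ᵥ (Ah *ᵥ v) = μ * (pa : ℂ) := by
      rw [hv, Matrix.mulVec_smul, dotProduct_smul, hPq, smul_eq_mul]
    have t1 : star v ⬝ᵥ (Ah)ᵀ *ᵥ (Ph *ᵥ v) = (starRingEnd ℂ) μ * (pa : ℂ) := by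
      rw [Matrix.dotProduct_mulVec, Matrix.vecMul_transpose, hconj, hv, star_smul,
        smul_dotProduct, hPq, smul_eq_mul]
      rfl
    rw [t1, t2]; ring
  have hRneg : star v ⬝ᵥ (R.map f) *ᵥ v = (-ra : ℝ) := by
    have : star v ⬝ᵥ ((-R).map f) *ᵥ v = (ra : ℂ) := hRq
    rw [hmapneg, Matrix.neg_mulVec, dotProduct_neg] at this
    push_cast
    linear_combination (-1 : ℂ) * this
  rw [hRneg] at hrel
  have hcj : (starRingEnd ℂ) μ + μ = ((2 * μ.re : ℝ) : ℂ) := by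
    rw [add_comm, Complex.add_conj]
  rw [hcj] at hrel
  have : (-ra : ℝ) = 2 * μ.re * pa := by
    exact_mod_cast hrel
  nlinarith

/-! ### Integral part -/

attribute [local instance] Matrix.linftyOpNormedAddCommGroup Matrix.linftyOpNormedRing
  Matrix.linftyOpNormedAlgebra

lemma psd_trace_nonneg {k : ℕ} {M : Matrix (Fin k) (Fin k) ℝ} (hM : M.PosSemidef) :
    0 ≤ M.trace := by
  have h : ∀ i, 0 ≤ M i i := fun i => by
    have := hM.dotProduct_mulVec_nonneg (Pi.single i 1)
    simpa [dotProduct, Matrix.mulVec, Pi.single_apply] using this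
  exact Finset.sum_nonneg fun i _ => h i

section
variable {n q : ℕ}

noncomputable def traceCLM (n : ℕ) : Matrix (Fin n) (Fin n) ℝ →L[ℝ] ℝ :=
  LinearMap.toContinuousLinearMap (Matrix.traceLinearMap (Fin n) ℝ ℝ)

noncomputable def transCLM (n : ℕ) : Matrix (Fin n) (Fin n) ℝ →L[ℝ] Matrix (Fin n) (Fin n) ℝ :=
  LinearMap.toContinuousLinearMap ((Matrix.transposeLinearEquiv (Fin n) (Fin n) ℝ ℝ).toLinearMap)

lemma hasDerivAt_u (Acl : Matrix (Fin n) (Fin n) ℝ) (t : ℝ) :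
    HasDerivAt (fun s : ℝ => mexp (s • Acl)) (Acl * mexp (t • Acl)) t :=
  hasDerivAt_exp_smul_const' Acl t

lemma hasDerivAt_FX (Acl X M : Matrix (Fin n) (Fin n) ℝ) (t : ℝ) :
    HasDerivAt (fun s : ℝ => (X * mexp (s • Acl) * M * (mexp (s • Acl))ᵀ).trace)
      (((Aclᵀ * X + X * Acl) * mexp (t • Acl) * M * (mexp (t • Acl))ᵀ).trace) t := by
  set u : ℝ → Matrix (Fin n) (Fin n) ℝ := fun s => mexp (s • Acl)
  have hu : HasDerivAt u (Acl * u t) t := hasDerivAt_u Acl t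
  have hut : HasDerivAt (fun s => (u s)ᵀ) ((Acl * u t)ᵀ) t := by
    have := (transCLM n).hasFDerivAt.comp_hasDerivAt t hu
    exact this
  have h1 : HasDerivAt (fun s => X * u s * M) (X * (Acl * u t) * M) t :=
    (hu.const_mul X).mul_const M
  have h2 := h1.mul hut
  have h3 := (traceCLM n).hasFDerivAt.comp_hasDerivAt t h2
  have heq : (traceCLM n) (X * (Acl * u t) * M * (u t)ᵀ + X * u t * M * (Acl * u t)ᵀ)
      = ((Aclᵀ * X + X * Acl) * u t * M * (u t)ᵀ).trace := by
    show (X * (Acl * u t) * M * (u t)ᵀ + X * u t * M * (Acl * u t)ᵀ).trace = _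
    rw [Matrix.transpose_mul, Matrix.add_mul, Matrix.add_mul, Matrix.add_mul, Matrix.trace_add]
    rw [show X * u t * M * ((u t)ᵀ * Aclᵀ) = (X * u t * M * (u t)ᵀ) * Aclᵀ by
      simp only [Matrix.mul_assoc]]
    rw [Matrix.trace_mul_comm (X * u t * M * (u t)ᵀ) Aclᵀ]
    simp only [Matrix.mul_assoc]
    rw [Matrix.trace_add, add_comm]
  exact h3.congr_deriv heq

lemma aux_nonneg {X : Matrix (Fin n) (Fin n) ℝ} (hX : X.PosSemidef)
    (Z : Matrix (Fin n) (Fin q) ℝ) : 0 ≤ (X * Z * Zᵀ).trace := by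
  rw [Matrix.trace_mul_comm (X * Z) Zᵀ, ← Matrix.mul_assoc]
  have hpsd : (Zᵀ * X * Z).PosSemidef := by
    have := hX.conjTranspose_mul_mul_same Z
    rwa [conjTranspose_eq_transpose_of_trivial] at this
  exact psd_trace_nonneg hpsd

lemma h2_bound {p : ℕ} (Acl P : Matrix (Fin n) (Fin n) ℝ) (W : Matrix (Fin p) (Fin n) ℝ)
    (E : Matrix (Fin n) (Fin q) ℝ) (hP : P.PosSemidef)
    (hL : (-(Aclᵀ * P + P * Acl + Wᵀ * W)).PosSemidef) {γ : ℝ}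
    (hγc : (Eᵀ * P * E).trace < γ) :
    (∫ t in Set.Ioi (0:ℝ),
        ((W * mexp (t • Acl) * E)ᵀ * (W * mexp (t • Acl) * E)).trace) < γ := by
  set u : ℝ → Matrix (Fin n) (Fin n) ℝ := fun s => mexp (s • Acl) with hu_def
  set M : Matrix (Fin n) (Fin n) ℝ := E * Eᵀ with hM_def
  set S : Matrix (Fin n) (Fin n) ℝ := Wᵀ * W with hS_def
  set Qm : Matrix (Fin n) (Fin n) ℝ := -(Aclᵀ * P + P * Acl + Wᵀ * W) with hQm_def
  set f : ℝ → ℝ := fun t => (S * u t * M * (u t)ᵀ).trace with hf_def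
  set g : ℝ → ℝ := fun t => (Qm * u t * M * (u t)ᵀ).trace with hg_def
  set G : ℝ → ℝ := fun t => (P * u t * M * (u t)ᵀ).trace with hG_def
  have hSpsd : S.PosSemidef := by
    have := Matrix.posSemidef_conjTranspose_mul_self W
    rwa [conjTranspose_eq_transpose_of_trivial] at this
  have hfeq : ∀ t : ℝ, ((W * u t * E)ᵀ * (W * u t * E)).trace = f t := by
    intro t
    have h1 : (W * u t * E)ᵀ * (W * u t * E) = (Eᵀ * (u t)ᵀ) * (S * (u t * E)) := by
      simp only [Matrix.transpose_mul, Matrix.mul_assoc, hS_def]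
    rw [h1, Matrix.trace_mul_comm]
    simp only [hf_def, hM_def, Matrix.mul_assoc]
  have hassoc : ∀ (X : Matrix (Fin n) (Fin n) ℝ) (t : ℝ),
      X * u t * M * (u t)ᵀ = X * (u t * E) * ((u t * E))ᵀ := by
    intro X t
    simp only [Matrix.transpose_mul, hM_def, Matrix.mul_assoc]
  have hf0 : ∀ t, 0 ≤ f t := fun t => by
    rw [hf_def]; simp only; rw [hassoc]; exact aux_nonneg hSpsd _
  have hg0 : ∀ t, 0 ≤ g t := fun t => by
    rw [hg_def]; simp only; rw [hassoc]; exact aux_nonneg hL _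
  have hG0 : ∀ t, 0 ≤ G t := fun t => by
    rw [hG_def]; simp only; rw [hassoc]; exact aux_nonneg hP _
  have hGderiv : ∀ t, HasDerivAt G (-(g t) - f t) t := by
    intro t
    have h := hasDerivAt_FX Acl P M t
    have hid : Aclᵀ * P + P * Acl = -Qm - S := by rw [hQm_def, hS_def, neg_neg]; abel
    rw [hid] at h
    have : ((-Qm - S) * u t * M * (u t)ᵀ).trace = -(g t) - f t := by
      simp only [Matrix.sub_mul, Matrix.neg_mul, Matrix.trace_sub, Matrix.trace_neg,
        hg_def, hf_def]
    rwa [this] at h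
  have hfc : Continuous f := by
    rw [continuous_iff_continuousAt]
    exact fun t => (hasDerivAt_FX Acl S M t).continuousAt
  have hgc : Continuous g := by
    rw [continuous_iff_continuousAt]
    exact fun t => (hasDerivAt_FX Acl Qm M t).continuousAt
  have hG0val : G 0 = (Eᵀ * P * E).trace := by
    have hu0 : u 0 = 1 := by
      rw [hu_def]; simp only; rw [zero_smul]; exact NormedSpace.exp_zero (𝔸 := Matrix (Fin n) (Fin n) ℝ)
    rw [hG_def]; simp only; rw [hu0]
    rw [Matrix.transpose_one, Matrix.mul_one, Matrix.mul_one, hM_def, ← Matrix.mul_assoc,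
      Matrix.trace_mul_comm]
    rw [← Matrix.mul_assoc]
  have hpart : ∀ T : ℝ, 0 ≤ T → (∫ t in (0:ℝ)..T, f t) ≤ (Eᵀ * P * E).trace := by
    intro T hT
    have hftc : (∫ t in (0:ℝ)..T, (-(g t) - f t)) = G T - G 0 := by
      apply intervalIntegral.integral_eq_sub_of_hasDerivAt
      · exact fun x _ => hGderiv x
      · exact ((hgc.neg.sub hfc).intervalIntegrable 0 T)
    have hgint : IntervalIntegrable g MeasureTheory.volume 0 T := hgc.intervalIntegrable 0 T
    have hfint : IntervalIntegrable f MeasureTheory.volume 0 T := hfc.intervalIntegrable 0 T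
    have hsplit : (∫ t in (0:ℝ)..T, (-(g t) - f t))
        = -(∫ t in (0:ℝ)..T, g t) - (∫ t in (0:ℝ)..T, f t) := by
      have h2 : (∫ t in (0:ℝ)..T, (-(g t) - f t))
          = (∫ t in (0:ℝ)..T, -(g t)) - ∫ t in (0:ℝ)..T, f t :=
        intervalIntegral.integral_sub ((hgc.neg).intervalIntegrable 0 T) hfint
      rw [h2, intervalIntegral.integral_neg]
    have hgnn : 0 ≤ ∫ t in (0:ℝ)..T, g t :=
      intervalIntegral.integral_nonneg hT (fun x _ => hg0 x)
    have := hftc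
    rw [hsplit] at this
    have hGT := hG0 T
    rw [← hG0val]
    linarith
  have hInt : MeasureTheory.IntegrableOn f (Set.Ioi (0:ℝ)) := by
    apply MeasureTheory.integrableOn_Ioi_of_intervalIntegral_norm_bounded
      ((Eᵀ * P * E).trace) 0 (fun i : ℝ => hfc.integrableOn_Ioc) Filter.tendsto_id
    filter_upwards [Filter.eventually_ge_atTop (0:ℝ)] with T hT
    have : (∫ x in (0:ℝ)..T, ‖f x‖) = ∫ x in (0:ℝ)..T, f x := by
      apply intervalIntegral.integral_congr
      intro x _
      exact Real.norm_of_nonneg (hf0 x)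
    rw [show (id T : ℝ) = T from rfl, this]
    exact hpart T hT
  have htend := MeasureTheory.intervalIntegral_tendsto_integral_Ioi 0 hInt Filter.tendsto_id
  have hle : (∫ t in Set.Ioi (0:ℝ), f t) ≤ (Eᵀ * P * E).trace := by
    apply le_of_tendsto htend
    filter_upwards [Filter.eventually_ge_atTop (0:ℝ)] with T hT
    exact hpart T hT
  calc (∫ t in Set.Ioi (0:ℝ),
        ((W * mexp (t • Acl) * E)ᵀ * (W * mexp (t • Acl) * E)).trace)
      = ∫ t in Set.Ioi (0:ℝ), f t := by
        apply MeasureTheory.integral_congr_ae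
        exact Filter.Eventually.of_forall (fun t => hfeq t)
    _ ≤ (Eᵀ * P * E).trace := hle
    _ < γ := hγc

end

theorem stmt6 {n m p q : ℕ}
    (A : Matrix (Fin n) (Fin n) ℝ) (B : Matrix (Fin n) (Fin m) ℝ)
    (C : Matrix (Fin p) (Fin n) ℝ) (D : Matrix (Fin p) (Fin m) ℝ)
    (E : Matrix (Fin n) (Fin q) ℝ)
    (hstab : ∃ F : Matrix (Fin m) (Fin n) ℝ, IsHurwitz (A + B * F))
    (hDC : Dᵀ * C = 0) (hDD : Dᵀ * D = 1)
    (γ : ℝ) (hγ : 0 < γ)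
    (P : Matrix (Fin n) (Fin n) ℝ) (hP : P.PosSemidef)
    (hRic : NegDef (Aᵀ * P + P * A - P * B * Bᵀ * P + Cᵀ * C))
    (htr : (Eᵀ * P * E).trace < γ)
    (K : Matrix (Fin m) (Fin n) ℝ) (hK : K = -(Bᵀ * P)) :
    IsHurwitz (A + B * K) ∧
    (∫ t in Set.Ioi (0:ℝ),
        (((C + D * K) * mexp (t • (A + B * K)) * E)ᵀ
          * ((C + D * K) * mexp (t • (A + B * K)) * E)).trace) < γ := by
  subst hK
  have hPsymm : Pᵀ = P := by
    have := hP.isHermitian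
    rwa [Matrix.IsHermitian, conjTranspose_eq_transpose_of_trivial] at this
  have hCD : Cᵀ * D = 0 := by
    have := congrArg Matrix.transpose hDC
    simpa [Matrix.transpose_mul] using this
  set Acl : Matrix (Fin n) (Fin n) ℝ := A + B * -(Bᵀ * P) with hAcl_def
  set Ric : Matrix (Fin n) (Fin n) ℝ := Aᵀ * P + P * A - P * B * Bᵀ * P + Cᵀ * C with hRic_def
  have hPBB : (P * B * Bᵀ * P).PosSemidef := by
    have h := Matrix.posSemidef_conjTranspose_mul_self (Bᵀ * P)
    rw [conjTranspose_eq_transpose_of_trivial, Matrix.transpose_mul, hPsymm,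
      Matrix.transpose_transpose] at h
    have : P * B * (Bᵀ * P) = P * B * Bᵀ * P := by simp only [Matrix.mul_assoc]
    rwa [this] at h
  have hCC : (Cᵀ * C).PosSemidef := by
    have := Matrix.posSemidef_conjTranspose_mul_self C
    rwa [conjTranspose_eq_transpose_of_trivial] at this
  have hlyap_eq : Aclᵀ * P + P * Acl = Ric - Cᵀ * C - P * B * Bᵀ * P := by
    rw [hAcl_def, hRic_def]
    simp only [Matrix.transpose_add, Matrix.transpose_mul, Matrix.transpose_neg,
      Matrix.add_mul, Matrix.mul_add, Matrix.neg_mul, Matrix.mul_neg, hPsymm,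
      Matrix.transpose_transpose, ← Matrix.mul_assoc]
    abel
  -- P is positive definite
  have hRneg : NegDef (Aclᵀ * P + P * Acl) := by
    rw [NegDef, hlyap_eq]
    have : -(Ric - Cᵀ * C - P * B * Bᵀ * P) = -Ric + (Cᵀ * C + P * B * Bᵀ * P) := by abel
    rw [this]
    exact (hRic : (-Ric).PosDef).add_posSemidef (hCC.add hPBB)
  have hPD : P.PosDef := posdef_of_psd_lyap Acl P _ hP hRneg rfl
  constructor
  · exact fun μ hμ => hurwitz_of_lyap Acl P _ hPD hRneg rfl μ hμ
  · -- cost bound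
    have hW : (C + D * -(Bᵀ * P))ᵀ * (C + D * -(Bᵀ * P)) = Cᵀ * C + P * B * Bᵀ * P := by
      simp only [Matrix.transpose_add, Matrix.transpose_mul, Matrix.transpose_neg,
        Matrix.add_mul, Matrix.mul_add, Matrix.neg_mul, Matrix.mul_neg, hPsymm,
        Matrix.transpose_transpose, ← Matrix.mul_assoc]
      rw [Matrix.mul_assoc (P * B) Dᵀ C, hDC, Matrix.mul_zero]
      rw [show Cᵀ * D * Bᵀ * P = (Cᵀ * D) * (Bᵀ * P) by simp only [Matrix.mul_assoc], hCD,
        Matrix.zero_mul]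
      rw [show P * B * Dᵀ * D * Bᵀ * P = P * B * (Dᵀ * D) * Bᵀ * P by
        simp only [Matrix.mul_assoc], hDD, Matrix.mul_one]
      abel
    have hL : (-(Aclᵀ * P + P * Acl
        + (C + D * -(Bᵀ * P))ᵀ * (C + D * -(Bᵀ * P)))).PosSemidef := by
      rw [hlyap_eq, hW]
      have : -(Ric - Cᵀ * C - P * B * Bᵀ * P + (Cᵀ * C + P * B * Bᵀ * P)) = -Ric := by abel
      rw [this]
      exact (hRic : (-Ric).PosDef).posSemidef
    exact h2_bound Acl P (C + D * -(Bᵀ * P)) E hP hL htr
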